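/- Let G be a connected finite simple graph on n vertices and let k be an even integer with 4 ≤ k ≤ n and k < n^{4/5}. Then there exists a set S of exactly k vertices of G such that G[S] is connected and σ(G[S]) ≥ min{ k/(4n), n^{−2/5} } · σ*(G), where σ*(G) is the maximum density over all nonempty subgraphs of G. -/

import Mathlib

open Finset

variable {V : Type*}

noncomputable def graphDensity [Fintype V] (G : SimpleGraph V) : ℝ :=
  2 * G.edgeSet.ncard / Fintype.card V

noncomputable def setDensity (G : SimpleGraph V) (A : Set V) : ℝ :=
  2 * (G.induce A).edgeSet.ncard / A.ncard

noncomputable def indDensity (G : SimpleGraph V) (S : Finset V) : ℝ :=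
  2 * (G.induce (S : Set V)).edgeSet.ncard / S.card

noncomputable def subDensity {G : SimpleGraph V} (H : G.Subgraph) : ℝ :=
  2 * H.edgeSet.ncard / H.verts.ncard

noncomputable def maxKDensity (G : SimpleGraph V) (k : ℕ) : ℝ :=
  sSup {x : ℝ | ∃ H : G.Subgraph, H.verts.ncard = k ∧ x = subDensity H}

noncomputable def maxConnKDensity (G : SimpleGraph V) (k : ℕ) : ℝ :=
  sSup {x : ℝ | ∃ H : G.Subgraph, H.verts.ncard = k ∧ H.Connected ∧ x = subDensity H}

noncomputable def maxDensity (G : SimpleGraph V) : ℝ :=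
  sSup {x : ℝ | ∃ H : G.Subgraph, H.verts.Nonempty ∧ x = subDensity H}

def cutCount (G : SimpleGraph V) [DecidableRel G.Adj] (S T : Finset V) : ℕ :=
  ((S ×ˢ T).filter fun p => G.Adj p.1 p.2).card

def IsCompOf (G : SimpleGraph V) (A W : Set V) : Prop :=
  A.Nonempty ∧ A ⊆ W ∧ (G.induce A).Connected ∧
    ∀ B : Set V, A ⊆ B → B ⊆ W → (G.induce B).Connected → B = A

noncomputable def subWDensity {G : SimpleGraph V} (w : Sym2 V → ℝ) (H : G.Subgraph) : ℝ :=
  2 * (∑ᶠ e ∈ H.edgeSet, w e) / H.verts.ncard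

noncomputable def indWDensity (G : SimpleGraph V) (w : Sym2 V → ℝ) (S : Finset V) : ℝ :=
  2 * (∑ᶠ e ∈ {e : Sym2 V | e ∈ G.edgeSet ∧ ∀ v ∈ e, v ∈ S}, w e) / S.card

noncomputable def maxKWDensity (G : SimpleGraph V) (w : Sym2 V → ℝ) (k : ℕ) : ℝ :=
  sSup {x : ℝ | ∃ H : G.Subgraph, H.verts.ncard = k ∧ x = subWDensity w H}

noncomputable def maxConnKWDensity (G : SimpleGraph V) (w : Sym2 V → ℝ) (k : ℕ) : ℝ :=
  sSup {x : ℝ | ∃ H : G.Subgraph, H.verts.ncard = k ∧ H.Connected ∧ x = subWDensity w H}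

open scoped Classical in
noncomputable def degIn (G : SimpleGraph V) (S : Finset V) (v : V) : ℕ :=
  (S.filter (fun u => G.Adj v u)).card

open scoped Classical in
noncomputable def eSum (G : SimpleGraph V) (S : Finset V) : ℕ :=
  ∑ v ∈ S, degIn G S v

section Aux
open scoped Classical
variable {G : SimpleGraph V} {S T A B : Finset V} {v : V}

lemma degIn_mono (h : S ⊆ T) (v : V) : degIn G S v ≤ degIn G T v :=
  Finset.card_le_card (Finset.filter_subset_filter _ h)

lemma degIn_le_pred (hv : v ∈ S) : degIn G S v ≤ S.card - 1 := by
  have h1 : S.filter (fun u => G.Adj v u) ⊆ S.erase v := by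
    intro u hu
    simp only [Finset.mem_filter] at hu
    exact Finset.mem_erase.2 ⟨fun h => G.irrefl (h ▸ hu.2), hu.1⟩
  calc degIn G S v ≤ (S.erase v).card := Finset.card_le_card h1
    _ = S.card - 1 := Finset.card_erase_of_mem hv

lemma degIn_erase_self : degIn G (S.erase v) v = degIn G S v := by
  unfold degIn
  congr 1
  ext u
  simp only [Finset.mem_filter, Finset.mem_erase]
  exact ⟨fun h => ⟨h.1.2, h.2⟩, fun h => ⟨⟨fun he => G.irrefl (he ▸ h.2), h.1⟩, h.2⟩⟩

lemma degIn_pos_iff : 0 < degIn G T v ↔ ∃ u ∈ T, G.Adj v u := by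
  unfold degIn
  rw [Finset.card_pos]
  constructor
  · rintro ⟨u, hu⟩
    simp only [Finset.mem_filter] at hu
    exact ⟨u, hu.1, hu.2⟩
  · rintro ⟨u, hu, ha⟩
    exact ⟨u, Finset.mem_filter.2 ⟨hu, ha⟩⟩

lemma degIn_union (h : Disjoint A B) : degIn G (A ∪ B) v = degIn G A v + degIn G B v := by
  unfold degIn
  rw [Finset.filter_union]
  exact Finset.card_union_of_disjoint (Finset.disjoint_filter_filter h)

lemma eSum_insert (hv : v ∉ S) : eSum G (insert v S) = eSum G S + 2 * degIn G S v := by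
  unfold eSum
  rw [Finset.sum_insert hv]
  have h1 : degIn G (insert v S) v = degIn G S v := by
    unfold degIn
    rw [Finset.filter_insert, if_neg (G.irrefl)]
  have h2 : ∀ u ∈ S, degIn G (insert v S) u = degIn G S u + if G.Adj u v then 1 else 0 := by
    intro u hu
    unfold degIn
    rw [Finset.filter_insert]
    split_ifs with h
    · rw [Finset.card_insert_of_notMem (fun hmem => hv (Finset.mem_filter.1 hmem).1)]
    · rw [Nat.add_zero]
  rw [h1, Finset.sum_congr rfl h2, Finset.sum_add_distrib]
  have h3 : (∑ x ∈ S, if G.Adj x v then 1 else 0) = degIn G S v := by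
    rw [← Finset.card_filter]
    unfold degIn
    congr 1
    ext u
    simp [G.adj_comm]
  omega

lemma eSum_erase (hv : v ∈ S) : eSum G S = eSum G (S.erase v) + 2 * degIn G (S.erase v) v := by
  conv_lhs => rw [← Finset.insert_erase hv]
  exact eSum_insert (Finset.notMem_erase _ _)

lemma eSum_mono (h : S ⊆ T) : eSum G S ≤ eSum G T := by
  unfold eSum
  calc ∑ v ∈ S, degIn G S v ≤ ∑ v ∈ S, degIn G T v :=
        Finset.sum_le_sum fun v _ => degIn_mono h v
    _ ≤ ∑ v ∈ T, degIn G T v := Finset.sum_le_sum_of_subset h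

lemma eSum_le : eSum G S ≤ S.card * (S.card - 1) := by
  unfold eSum
  calc ∑ v ∈ S, degIn G S v ≤ ∑ _v ∈ S, (S.card - 1) :=
        Finset.sum_le_sum fun v hv => degIn_le_pred hv
    _ = S.card * (S.card - 1) := by rw [Finset.sum_const, smul_eq_mul]

lemma degIn_sum_comm : ∑ v ∈ A, degIn G B v = ∑ v ∈ B, degIn G A v := by
  unfold degIn
  simp only [Finset.card_filter]
  rw [Finset.sum_comm]
  congr 1
  ext u
  congr 1
  ext w
  simp [G.adj_comm]

lemma eSum_split (hd : Disjoint A B) (h : ∀ a ∈ A, ∀ b ∈ B, ¬ G.Adj a b) :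
    eSum G (A ∪ B) = eSum G A + eSum G B := by
  unfold eSum
  rw [Finset.sum_union hd]
  have hA : ∀ a ∈ A, degIn G (A ∪ B) a = degIn G A a := by
    intro a ha
    rw [degIn_union hd]
    have : degIn G B a = 0 := by
      by_contra hc
      obtain ⟨u, hu, hadj⟩ := degIn_pos_iff.1 (Nat.pos_of_ne_zero hc)
      exact h a ha u hu hadj
    omega
  have hB : ∀ b ∈ B, degIn G (A ∪ B) b = degIn G B b := by
    intro b hb
    rw [degIn_union hd]
    have : degIn G A b = 0 := by
      by_contra hc
      obtain ⟨u, hu, hadj⟩ := degIn_pos_iff.1 (Nat.pos_of_ne_zero hc)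
      exact h u hu b hb hadj.symm
    omega
  rw [Finset.sum_congr rfl hA, Finset.sum_congr rfl hB]

end Aux

section Aux2
open scoped Classical
variable [Fintype V] {G : SimpleGraph V} {S : Finset V}

lemma eSum_eq_pairs (G : SimpleGraph V) (S : Finset V) :
    eSum G S = ((S ×ˢ S).filter fun p => G.Adj p.1 p.2).card := by
  rw [Finset.card_filter, Finset.sum_product]
  unfold eSum degIn
  exact Finset.sum_congr rfl fun v _ => (Finset.card_filter _ _)

lemma twice_ncard_induce (G : SimpleGraph V) (S : Finset V) :
    2 * (G.induce (S : Set V)).edgeSet.ncard = eSum G S := by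
  have h1 : (G.induce (S : Set V)).edgeSet.ncard = #(G.induce (S : Set V)).edgeFinset := by
    rw [Set.ncard_eq_toFinset_card', SimpleGraph.edgeFinset]
  rw [h1, SimpleGraph.two_mul_card_edgeFinset, eSum_eq_pairs]
  refine Finset.card_bij (fun p _ => ((p.1 : V), (p.2 : V))) ?_ ?_ ?_
  · intro p hp
    simp only [Finset.mem_filter, Finset.mem_univ, true_and] at hp
    simp only [Finset.mem_filter, Finset.mem_product]
    exact ⟨⟨Finset.coe_mem _, Finset.coe_mem _⟩, hp⟩
  · intro p hp q hq h
    ext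
    · exact congrArg Prod.fst h
    · exact congrArg Prod.snd h
  · intro p hp
    have h1 := (Finset.mem_product.1 (Finset.mem_filter.1 hp).1).1
    have h2 := (Finset.mem_product.1 (Finset.mem_filter.1 hp).1).2
    refine ⟨(⟨p.1, h1⟩, ⟨p.2, h2⟩), ?_, rfl⟩
    simp only [Finset.mem_filter, Finset.mem_univ, true_and]
    exact (Finset.mem_filter.1 hp).2

lemma twice_ncard_induce_set (G : SimpleGraph V) (A : Set V) :
    2 * (G.induce A).edgeSet.ncard = eSum G A.toFinset := by
  rw [← Set.coe_toFinset A, Finset.toFinset_coe]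
  exact twice_ncard_induce G A.toFinset

lemma subgraph_edge_bound (H : G.Subgraph) :
    2 * H.edgeSet.ncard ≤ eSum G H.verts.toFinset := by
  have h0 : H.edgeSet.ncard = H.coe.edgeSet.ncard := by
    rw [← H.image_coe_edgeSet_coe]
    exact Set.ncard_image_of_injective _ (Sym2.map.injective Subtype.val_injective)
  have hle : H.coe ≤ G.induce H.verts := by
    intro a b hab
    exact H.coe_adj_sub a b hab
  have h2 : H.coe.edgeSet.ncard ≤ (G.induce H.verts).edgeSet.ncard :=
    Set.ncard_le_ncard (SimpleGraph.edgeSet_mono hle) (Set.toFinite _)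
  calc 2 * H.edgeSet.ncard = 2 * H.coe.edgeSet.ncard := by rw [h0]
    _ ≤ 2 * (G.induce H.verts).edgeSet.ncard := by omega
    _ = eSum G H.verts.toFinset := twice_ncard_induce_set G H.verts

end Aux2

section Aux3
open scoped Classical
variable [Fintype V] {G : SimpleGraph V} {S T : Finset V}

lemma induce_singleton_connected (G : SimpleGraph V) (v : V) :
    (G.induce ({v} : Set V)).Connected := by
  rw [SimpleGraph.connected_iff]
  refine ⟨?_, ⟨⟨v, rfl⟩⟩⟩
  intro a b
  have : a = b := Subtype.ext (a.2.trans b.2.symm)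
  rw [this]

lemma insert_connected (hT : (G.induce (T : Set V)).Connected) {u v : V}
    (hu : u ∈ T) (ha : G.Adj u v) :
    (G.induce ((insert v T : Finset V) : Set V)).Connected := by
  have h := SimpleGraph.connected_induce_union hT.preconnected (induce_singleton_connected G v).preconnected
    (by exact hu) rfl ha
  have heq : ((insert v T : Finset V) : Set V) = ((T : Set V) ∪ {v}) := by
    rw [Finset.coe_insert, Set.insert_eq, Set.union_comm]
  rw [heq]
  exact h

lemma walk_cross {α : Type*} {H : SimpleGraph α} {s : Set α} :
    ∀ {u v : α} (_ : H.Walk u v), u ∈ s → v ∉ s →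
      ∃ a ∈ s, ∃ b, b ∉ s ∧ H.Adj a b := by
  intro u v p
  induction p with
  | nil => intro hu hv; exact absurd hu hv
  | @cons u w v h q ih =>
    intro hu hv
    by_cases hw : w ∈ s
    · exact ih hw hv
    · exact ⟨u, hu, w, hw, h⟩

lemma exists_boundary (W T : Finset V) (hconn : (G.induce (W : Set V)).Connected)
    (hTW : T ⊆ W) (hT : T.Nonempty) (hne : ∃ w ∈ W, w ∉ T) :
    ∃ u ∈ T, ∃ v, v ∈ W ∧ v ∉ T ∧ G.Adj u v := by
  obtain ⟨u, hu⟩ := hT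
  obtain ⟨w, hwW, hwT⟩ := hne
  obtain ⟨p⟩ := hconn.preconnected ⟨u, hTW hu⟩ ⟨w, hwW⟩
  obtain ⟨a, ha, b, hb, hadj⟩ :=
    walk_cross (s := {x : ↥(W : Set V) | (x : V) ∈ T}) p hu hwT
  exact ⟨a, ha, b, b.2, hb, hadj⟩

lemma grow (G : SimpleGraph V) (W : Finset V) (hW : (G.induce (W : Set V)).Connected) :
    ∀ (n : ℕ) (T : Finset V), T ⊆ W → T.Nonempty → (G.induce (T : Set V)).Connected →
    T.card + n ≤ W.card → ∃ S : Finset V, T ⊆ S ∧ S ⊆ W ∧ S.card = T.card + n ∧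
      (G.induce (S : Set V)).Connected ∧ eSum G T + 2 * n ≤ eSum G S := by
  intro n
  induction n with
  | zero =>
    intro T h1 _ h3 _
    exact ⟨T, Finset.Subset.refl T, h1, by omega, h3, by omega⟩
  | succ n ih =>
    intro T hTW hTne hTconn hcard
    have hne : ∃ w ∈ W, w ∉ T := by
      by_contra h
      push_neg at h
      have hWT : W ⊆ T := fun w hw => h w hw
      have := Finset.card_le_card hWT
      omega
    obtain ⟨u, huT, v, hvW, hvT, hadj⟩ := exists_boundary W T hW hTW hTne hne
    have hconn2 := insert_connected hTconn huT hadj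
    have hsub : insert v T ⊆ W := Finset.insert_subset hvW hTW
    have hcard2 : (insert v T).card = T.card + 1 := Finset.card_insert_of_notMem hvT
    obtain ⟨S, hS1, hS2, hS3, hS4, hS5⟩ := ih (insert v T) hsub
      ⟨v, Finset.mem_insert_self v T⟩ hconn2 (by omega)
    refine ⟨S, (Finset.subset_insert v T).trans hS1, hS2, by omega, hS4, ?_⟩
    have he : eSum G (insert v T) = eSum G T + 2 * degIn G T v := eSum_insert hvT
    have hd : 1 ≤ degIn G T v := degIn_pos_iff.2 ⟨u, huT, hadj.symm⟩
    omega

lemma univ_connected (hG : G.Connected) :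
    (G.induce ((Finset.univ : Finset V) : Set V)).Connected := by
  rw [Finset.coe_univ]
  exact (SimpleGraph.induceUnivIso G).connected_iff.mpr hG

lemma attach_set (T : Finset V) (hT : (G.induce (T : Set V)).Connected) (P : Finset V) :
    (∀ v ∈ P, v ∉ T ∧ 1 ≤ degIn G T v) →
    (G.induce ((T ∪ P : Finset V) : Set V)).Connected ∧ (T ∪ P).card = T.card + P.card ∧
      eSum G T + 2 * ∑ v ∈ P, degIn G T v ≤ eSum G (T ∪ P) := by
  induction P using Finset.induction with
  | empty =>
    intro _
    rw [Finset.union_empty]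
    exact ⟨hT, by simp, by simp⟩
  | @insert a P hanotP ih =>
    intro hP
    obtain ⟨ih1, ih2, ih3⟩ := ih (fun v hv => hP v (Finset.mem_insert_of_mem hv))
    have haT : a ∉ T := (hP a (Finset.mem_insert_self a P)).1
    have hadeg : 1 ≤ degIn G T a := (hP a (Finset.mem_insert_self a P)).2
    have haTP : a ∉ T ∪ P := by
      simp only [Finset.mem_union, not_or]
      exact ⟨haT, hanotP⟩
    obtain ⟨u, huT, hua⟩ := degIn_pos_iff.1 hadeg
    have hconn' := insert_connected ih1 (Finset.mem_union_left P huT) hua.symm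
    have hun : T ∪ insert a P = insert a (T ∪ P) := by
      ext x
      simp only [Finset.mem_union, Finset.mem_insert]
      tauto
    rw [hun]
    refine ⟨hconn', ?_, ?_⟩
    · rw [Finset.card_insert_of_notMem haTP, ih2, Finset.card_insert_of_notMem hanotP]
      omega
    · rw [eSum_insert haTP, Finset.sum_insert hanotP]
      have hmono : degIn G T a ≤ degIn G (T ∪ P) a := degIn_mono Finset.subset_union_left a
      omega

lemma exists_top_subset (s : Finset V) (f : V → ℕ) (j : ℕ) (hj : j ≤ s.card) :
    ∃ t, t ⊆ s ∧ t.card = j ∧ j * ∑ v ∈ s, f v ≤ s.card * ∑ v ∈ t, f v := by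
  obtain ⟨t0, ht0s, ht0c⟩ := Finset.exists_subset_card_eq hj
  have hne : (s.powersetCard j).Nonempty := ⟨t0, Finset.mem_powersetCard.2 ⟨ht0s, ht0c⟩⟩
  obtain ⟨t, htmem, htmax⟩ := Finset.exists_max_image (s.powersetCard j)
    (fun t => ∑ v ∈ t, f v) hne
  obtain ⟨hts, htc⟩ := Finset.mem_powersetCard.1 htmem
  refine ⟨t, hts, htc, ?_⟩
  have key : ∀ x ∈ s \ t, ∀ y ∈ t, f x ≤ f y := by
    intro x hx y hy
    by_contra hlt
    push_neg at hlt
    have hxs := (Finset.mem_sdiff.1 hx).1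
    have hxt := (Finset.mem_sdiff.1 hx).2
    have hxe : x ∉ t.erase y := fun hc => hxt (Finset.mem_of_mem_erase hc)
    have ht'mem : insert x (t.erase y) ∈ s.powersetCard j := by
      rw [Finset.mem_powersetCard]
      constructor
      · intro z hz
        rcases Finset.mem_insert.1 hz with rfl | hz'
        · exact hxs
        · exact hts (Finset.mem_of_mem_erase hz')
      · rw [Finset.card_insert_of_notMem hxe, Finset.card_erase_of_mem hy, htc]
        have : 1 ≤ j := by
          have := Finset.card_pos.2 ⟨y, hy⟩
          omega
        omega
    have hle := htmax _ ht'mem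
    rw [Finset.sum_insert hxe] at hle
    have hsum2 : f y + ∑ v ∈ t.erase y, f v = ∑ v ∈ t, f v := Finset.add_sum_erase t f hy
    omega
  have h2 : ∑ x ∈ s \ t, j * f x ≤ (s.card - j) * ∑ y ∈ t, f y := by
    calc ∑ x ∈ s \ t, j * f x ≤ ∑ _x ∈ s \ t, ∑ y ∈ t, f y := by
          refine Finset.sum_le_sum fun x hx => ?_
          calc j * f x = ∑ _y ∈ t, f x := by rw [Finset.sum_const, htc, smul_eq_mul]
            _ ≤ ∑ y ∈ t, f y := Finset.sum_le_sum fun y hy => key x hx y hy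
      _ = (s \ t).card * ∑ y ∈ t, f y := by rw [Finset.sum_const, smul_eq_mul]
      _ = (s.card - j) * ∑ y ∈ t, f y := by rw [Finset.card_sdiff_of_subset hts, htc]
  have h3 : ∑ v ∈ s \ t, f v + ∑ v ∈ t, f v = ∑ v ∈ s, f v := Finset.sum_sdiff hts
  have h4 : j * ∑ x ∈ s \ t, f x = ∑ x ∈ s \ t, j * f x := Finset.mul_sum _ _ _
  calc j * ∑ v ∈ s, f v = j * ∑ v ∈ s \ t, f v + j * ∑ v ∈ t, f v := by
        rw [← h3]; ring
    _ ≤ (s.card - j) * ∑ y ∈ t, f y + j * ∑ v ∈ t, f v := by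
        rw [h4] at *; omega
    _ = ((s.card - j) + j) * ∑ y ∈ t, f y := by ring
    _ = s.card * ∑ y ∈ t, f y := by
        congr 1
        omega

end Aux3

section Aux4
open scoped Classical
variable [Fintype V] {G : SimpleGraph V}

lemma exists_good_U (G : SimpleGraph V) (d : ℝ)
    (hd : ∃ U0 : Finset V, U0.Nonempty ∧ d * U0.card ≤ (eSum G U0 : ℝ)) :
    ∃ U : Finset V, U.Nonempty ∧ d * U.card ≤ (eSum G U : ℝ) ∧
      (∀ v ∈ U, d ≤ 2 * degIn G U v) ∧ (G.induce (U : Set V)).Connected := by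
  set 𝒮 := (Finset.univ : Finset (Finset V)).filter
    (fun U => U.Nonempty ∧ d * U.card ≤ (eSum G U : ℝ)) with h𝒮
  have hSne : 𝒮.Nonempty := by
    obtain ⟨U0, h1, h2⟩ := hd
    exact ⟨U0, by simp [h𝒮, h1, h2]⟩
  obtain ⟨U, hUmem, hUmin⟩ := Finset.exists_min_image 𝒮 Finset.card hSne
  rw [h𝒮, Finset.mem_filter] at hUmem
  obtain ⟨-, hUne, hUd⟩ := hUmem
  have hmem𝒮 : ∀ W : Finset V, W.Nonempty → d * W.card ≤ (eSum G W : ℝ) → U.card ≤ W.card := by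
    intro W h1 h2
    exact hUmin W (by simp [h𝒮, h1, h2])
  have hmindeg : ∀ v ∈ U, d ≤ 2 * degIn G U v := by
    intro v hv
    by_contra hc
    push_neg at hc
    have hdpos : 0 < d := lt_of_le_of_lt (by positivity) hc
    have hcard2 : 2 ≤ U.card := by
      by_contra hc2
      push_neg at hc2
      have h1 : U.card = 1 := by
        have := Finset.card_pos.2 hUne
        omega
      have h2 : eSum G U = 0 := by
        have h3 := eSum_le (G := G) (S := U)
        rw [h1] at h3
        omega
      rw [h1, h2] at hUd
      simp at hUd
      linarith
    have hvne : (U.erase v).Nonempty := by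
      rw [← Finset.card_pos, Finset.card_erase_of_mem hv]
      omega
    have he : eSum G U = eSum G (U.erase v) + 2 * degIn G (U.erase v) v := eSum_erase hv
    have hdeg : degIn G (U.erase v) v = degIn G U v := degIn_erase_self
    have hWd : d * (U.erase v).card ≤ (eSum G (U.erase v) : ℝ) := by
      rw [Finset.card_erase_of_mem hv]
      have h1 : ((U.card - 1 : ℕ) : ℝ) = (U.card : ℝ) - 1 := by
        push_cast [Nat.cast_sub (by omega : 1 ≤ U.card)]
        ring
      rw [h1]
      have h2 : (eSum G (U.erase v) : ℝ) = (eSum G U : ℝ) - 2 * degIn G U v := by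
        rw [he, hdeg]
        push_cast
        ring
      rw [h2]
      nlinarith [hUd, hc]
    have := hmem𝒮 (U.erase v) hvne hWd
    rw [Finset.card_erase_of_mem hv] at this
    omega
  refine ⟨U, hUne, hUd, hmindeg, ?_⟩
  by_contra hnc
  obtain ⟨v₀, hv₀⟩ := hUne
  have hv₀' : v₀ ∈ (U : Set V) := hv₀
  set A := U.filter (fun u => ∃ (h : u ∈ (U : Set V)),
    (G.induce (U : Set V)).Reachable ⟨v₀, hv₀'⟩ ⟨u, h⟩) with hA
  have hAU : A ⊆ U := Finset.filter_subset _ _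
  have hv₀A : v₀ ∈ A := by
    rw [hA, Finset.mem_filter]
    exact ⟨hv₀, hv₀', SimpleGraph.Reachable.refl _⟩
  set B := U \ A with hB
  by_cases hBe : B = ∅
  · apply hnc
    have hUA : ∀ u ∈ U, u ∈ A := by
      intro u hu
      by_contra hc
      have : u ∈ B := Finset.mem_sdiff.2 ⟨hu, hc⟩
      rw [hBe] at this
      exact absurd this (Finset.notMem_empty u)
    rw [SimpleGraph.connected_iff]
    refine ⟨?_, ⟨⟨v₀, hv₀'⟩⟩⟩
    intro x y
    have hx := hUA x.1 x.2
    have hy := hUA y.1 y.2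
    rw [hA, Finset.mem_filter] at hx hy
    obtain ⟨-, hx1, hx2⟩ := hx
    obtain ⟨-, hy1, hy2⟩ := hy
    have hx2' : (G.induce (U : Set V)).Reachable ⟨v₀, hv₀'⟩ x := hx2
    have hy2' : (G.induce (U : Set V)).Reachable ⟨v₀, hv₀'⟩ y := hy2
    exact hx2'.symm.trans hy2'
  · have hBne : B.Nonempty := Finset.nonempty_of_ne_empty hBe
    have hcross : ∀ a ∈ A, ∀ b ∈ B, ¬ G.Adj a b := by
      intro a ha b hb hadj
      have hbU := (Finset.mem_sdiff.1 hb).1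
      have hbA := (Finset.mem_sdiff.1 hb).2
      apply hbA
      rw [hA, Finset.mem_filter] at ha ⊢
      obtain ⟨haU, ha1, ha2⟩ := ha
      have hbU' : b ∈ (U : Set V) := hbU
      have hstep : (G.induce (U : Set V)).Adj ⟨a, ha1⟩ ⟨b, hbU'⟩ := by
        simp only [SimpleGraph.comap_adj, Function.Embedding.coe_subtype]
        exact hadj
      exact ⟨hbU, hbU', ha2.trans hstep.reachable⟩
    have hdisj : Disjoint A B := Finset.disjoint_sdiff
    have hUAB : A ∪ B = U := Finset.union_sdiff_of_subset hAU
    have hsplit : eSum G U = eSum G A + eSum G B := by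
      rw [← hUAB]
      exact eSum_split hdisj hcross
    have hcards : A.card + B.card = U.card := by
      rw [← hUAB, Finset.card_union_of_disjoint hdisj]
    have hAne : A.Nonempty := ⟨v₀, hv₀A⟩
    have hApos := Finset.card_pos.2 hAne
    have hBpos := Finset.card_pos.2 hBne
    have hor : d * A.card ≤ (eSum G A : ℝ) ∨ d * B.card ≤ (eSum G B : ℝ) := by
      by_contra hc
      push_neg at hc
      have h1 : (eSum G U : ℝ) = (eSum G A : ℝ) + (eSum G B : ℝ) := by
        rw [hsplit]; push_cast; ring
      have h2 : (U.card : ℝ) = (A.card : ℝ) + (B.card : ℝ) := by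
        rw [← hcards]; push_cast; ring
      have h3 : d * (U.card : ℝ) = d * A.card + d * B.card := by rw [h2]; ring
      linarith [hc.1, hc.2, hUd, h1, h3]
    rcases hor with h | h
    · have := hmem𝒮 A hAne h
      omega
    · have := hmem𝒮 B hBne h
      omega

lemma ineq1 {d m k r : ℝ} (hd0 : 0 ≤ d) (hdm : d ≤ m - 1) (hm1 : 1 ≤ m) (hmk : m ≤ k)
    (hk : 4 ≤ k) (hr0 : 0 < r) (hr34 : r ≤ 3/4) (hr2k : k * r^2 ≤ 1) :
    r * d * k ≤ d * m + 2 * (k - m) := by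
  by_cases hc : m < r * k
  · have h1 : d * (r * k - m) ≤ (m - 1) * (r * k - m) :=
      mul_le_mul_of_nonneg_right hdm (by linarith)
    have h2 : (m - 1) * (r * k - m) ≤ (r * k - 1)^2 / 4 := by
      nlinarith [sq_nonneg (r * k - m - (m - 1))]
    have h3 : (r * k - 1)^2 ≤ (r * k)^2 := by
      nlinarith [hm1, hc]
    have h4 : (r * k)^2 ≤ k := by
      nlinarith [hr2k, hk]
    have h5 : 2 * (k - m) ≥ 2 * k - 2 * (r * k) := by linarith
    have h6 : 2 * k - 2 * (r * k) ≥ k / 2 := by nlinarith [hr34, hk]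
    nlinarith
  · push_neg at hc
    have h1 : r * d * k = d * (r * k) := by ring
    have h2 : d * (r * k) ≤ d * m := mul_le_mul_of_nonneg_left hc hd0
    linarith

end Aux4

section Aux5
open scoped Classical
variable [Fintype V] {G : SimpleGraph V}

lemma indDensity_eq (G : SimpleGraph V) (S : Finset V) :
    indDensity G S = (eSum G S : ℝ) / S.card := by
  unfold indDensity
  rw [← twice_ncard_induce G S]
  push_cast
  ring

lemma maxDensity_le (G : SimpleGraph V) (M : ℝ) (hM0 : 0 ≤ M)
    (h : ∀ W : Finset V, W.Nonempty → (eSum G W : ℝ) / W.card ≤ M) : maxDensity G ≤ M := by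
  apply Real.sSup_le _ hM0
  rintro x ⟨H, hHne, rfl⟩
  unfold subDensity
  have hWne : H.verts.toFinset.Nonempty := by rwa [Set.toFinset_nonempty]
  have hcard : H.verts.ncard = H.verts.toFinset.card := Set.ncard_eq_toFinset_card' _
  have hpos : (0:ℝ) < H.verts.toFinset.card := by exact_mod_cast Finset.card_pos.2 hWne
  calc 2 * (H.edgeSet.ncard : ℝ) / H.verts.ncard
      = ((2 * H.edgeSet.ncard : ℕ) : ℝ) / (H.verts.toFinset.card : ℝ) := by
        rw [hcard]; push_cast; ring
    _ ≤ (eSum G H.verts.toFinset : ℝ) / (H.verts.toFinset.card : ℝ) := by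
        gcongr
        exact_mod_cast subgraph_edge_bound H
    _ ≤ M := h _ hWne

lemma rpow_le34 {n : ℕ} (hn : 4 ≤ n) : ((n:ℝ)) ^ (-(2:ℝ)/5) ≤ 3/4 := by
  have hnR : (4:ℝ) ≤ (n:ℝ) := by exact_mod_cast hn
  have hn0 : (0:ℝ) < n := by linarith
  have hneg : (-(2:ℝ))/5 = -((2:ℝ)/5) := by norm_num
  rw [hneg, Real.rpow_neg hn0.le]
  have h43 : (4:ℝ)/3 ≤ (n:ℝ) ^ ((2:ℝ)/5) := by
    have hp5 : (((n:ℝ)) ^ ((2:ℝ)/5)) ^ (5:ℕ) = (n:ℝ)^(2:ℕ) := by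
      rw [← Real.rpow_natCast ((n:ℝ) ^ ((2:ℝ)/5)) 5, ← Real.rpow_mul hn0.le]
      norm_num [Real.rpow_two]
    have h16 : ((4:ℝ)/3) ^ (5:ℕ) ≤ (n:ℝ)^(2:ℕ) := by
      have : (16:ℝ) ≤ (n:ℝ)^(2:ℕ) := by nlinarith
      nlinarith
    refine le_of_pow_le_pow_left₀ (n := 5) (by norm_num) (Real.rpow_nonneg hn0.le _) ?_
    rw [hp5]
    exact h16
  calc ((n:ℝ) ^ ((2:ℝ)/5))⁻¹ ≤ ((4:ℝ)/3)⁻¹ := by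
        exact inv_anti₀ (by norm_num) h43
    _ = 3/4 := by norm_num

lemma rpow_sq_le {n k : ℕ} (hn : 4 ≤ n) (hk : (k:ℝ) < (n:ℝ)^((4:ℝ)/5)) :
    (k:ℝ) * (((n:ℝ)) ^ (-(2:ℝ)/5))^2 ≤ 1 := by
  have hnR : (4:ℝ) ≤ (n:ℝ) := by exact_mod_cast hn
  have hn0 : (0:ℝ) < n := by linarith
  have hsq : (((n:ℝ)) ^ (-(2:ℝ)/5))^2 = (n:ℝ) ^ (-(4:ℝ)/5) := by
    rw [sq, ← Real.rpow_add hn0]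
    norm_num
  rw [hsq]
  have hpos : (0:ℝ) < (n:ℝ) ^ (-(4:ℝ)/5) := Real.rpow_pos_of_pos hn0 _
  have h1 : (k:ℝ) * (n:ℝ) ^ (-(4:ℝ)/5) ≤ (n:ℝ)^((4:ℝ)/5) * (n:ℝ) ^ (-(4:ℝ)/5) := by
    exact mul_le_mul_of_nonneg_right hk.le hpos.le
  have h2 : (n:ℝ)^((4:ℝ)/5) * (n:ℝ) ^ (-(4:ℝ)/5) = 1 := by
    rw [← Real.rpow_add hn0]
    norm_num
  linarith

end Aux5

set_option maxHeartbeats 1000000 in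
/-- for `k < n^{4/5}` there is a connected `k`-subgraph of density at
least `min{k/(4n), n^{-2/5}}·σ*(G)`. -/
theorem stmt9 [Fintype V] (G : SimpleGraph V) (hG : G.Connected) (k : ℕ)
    (hke : Even k) (hk4 : 4 ≤ k) (hkn : k ≤ Fintype.card V)
    (hk45 : (k : ℝ) < (Fintype.card V : ℝ) ^ ((4 : ℝ) / 5)) :
    ∃ S : Finset V, S.card = k ∧ (G.induce (S : Set V)).Connected ∧
      indDensity G S ≥
        min ((k : ℝ) / (4 * (Fintype.card V : ℝ))) ((Fintype.card V : ℝ) ^ (-(2 : ℝ) / 5)) *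
          maxDensity G := by
  classical
  set n := Fintype.card V with hn
  have hn4 : 4 ≤ n := le_trans hk4 hkn
  have hn0 : 0 < n := by omega
  have hVne : Nonempty V := Fintype.card_pos_iff.mp hn0
  have hnR : (4:ℝ) ≤ (n:ℝ) := by exact_mod_cast hn4
  have hnRpos : (0:ℝ) < (n:ℝ) := by linarith
  have hkR : (4:ℝ) ≤ (k:ℝ) := by exact_mod_cast hk4
  have hkRpos : (0:ℝ) < (k:ℝ) := by linarith
  set r := (n:ℝ) ^ (-(2:ℝ)/5) with hrdef
  have hr0 : 0 < r := Real.rpow_pos_of_pos hnRpos _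
  have hr34 : r ≤ 3/4 := rpow_le34 hn4
  have hr2k : (k:ℝ) * r^2 ≤ 1 := rpow_sq_le hn4 hk45
  set d := maxDensity G with hd
  have hd0 : 0 ≤ d := by
    rw [hd]
    apply Real.sSup_nonneg
    rintro x ⟨H, hH, rfl⟩
    unfold subDensity
    positivity
  obtain ⟨U₀, hU₀ne, hU₀max⟩ : ∃ U₀ : Finset V, U₀.Nonempty ∧
      ∀ W : Finset V, W.Nonempty → (eSum G W : ℝ)/W.card ≤ (eSum G U₀ : ℝ)/U₀.card := by
    obtain ⟨U₀, hmem, hmax⟩ := Finset.exists_max_image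
      ((Finset.univ : Finset (Finset V)).filter (fun W => W.Nonempty))
      (fun W => (eSum G W : ℝ)/W.card)
      ⟨{Classical.arbitrary V}, by simp⟩
    exact ⟨U₀, (Finset.mem_filter.1 hmem).2, fun W hW => hmax W (by simp [hW])⟩
  have hM0 : (0:ℝ) ≤ (eSum G U₀ : ℝ)/U₀.card := by positivity
  have hdle : d ≤ (eSum G U₀ : ℝ)/U₀.card := maxDensity_le G _ hM0 hU₀max
  have hU₀d : d * U₀.card ≤ (eSum G U₀ : ℝ) := by
    have hpos : (0:ℝ) < U₀.card := by exact_mod_cast Finset.card_pos.2 hU₀ne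
    exact (le_div_iff₀ hpos).1 hdle
  obtain ⟨U, hUne, hUd, hUdeg, hUconn⟩ := exists_good_U G d ⟨U₀, hU₀ne, hU₀d⟩
  have hm1 : 1 ≤ U.card := Finset.card_pos.2 hUne
  have hmn : U.card ≤ n := by rw [hn]; exact Finset.card_le_univ U
  have hmnR : (U.card : ℝ) ≤ (n:ℝ) := by exact_mod_cast hmn
  have hmR1 : (1:ℝ) ≤ (U.card:ℝ) := by exact_mod_cast hm1
  have hmin0 : 0 ≤ min ((k:ℝ)/(4*(n:ℝ))) r := le_min (by positivity) hr0.le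
  by_cases hcase : U.card ≤ k
  · -- Case 1 : U is small, extend it
    have hmkR : (U.card : ℝ) ≤ (k:ℝ) := by exact_mod_cast hcase
    obtain ⟨S, hS1, hS2, hS3, hS4, hS5⟩ := grow G Finset.univ (univ_connected hG)
      (k - U.card) U (Finset.subset_univ U) hUne hUconn
      (by rw [Finset.card_univ, ← hn]; omega)
    have hScard : S.card = k := by omega
    refine ⟨S, hScard, hS4, ?_⟩
    rw [ge_iff_le, indDensity_eq, hScard, le_div_iff₀ hkRpos]
    have hdm : d ≤ (U.card:ℝ) - 1 := by
      have h1 : (eSum G U : ℝ) ≤ (U.card:ℝ) * ((U.card:ℝ) - 1) := by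
        have h2 := eSum_le (G := G) (S := U)
        have h3 : ((U.card * (U.card - 1) : ℕ) : ℝ) = (U.card:ℝ) * ((U.card:ℝ)-1) := by
          push_cast [Nat.cast_sub hm1]
          ring
        calc (eSum G U : ℝ) ≤ ((U.card * (U.card - 1) : ℕ) : ℝ) := by exact_mod_cast h2
          _ = _ := h3
      have hmpos : (0:ℝ) < (U.card:ℝ) := by linarith
      nlinarith [hUd, h1, hmpos]
    have hESbound : d * (U.card:ℝ) + 2 * ((k:ℝ) - (U.card:ℝ)) ≤ (eSum G S : ℝ) := by
      have h1 : ((eSum G U + 2*(k - U.card) : ℕ) : ℝ) ≤ (eSum G S : ℝ) := by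
        exact_mod_cast hS5
      have h2 : ((eSum G U + 2*(k - U.card) : ℕ) : ℝ)
          = (eSum G U : ℝ) + 2*((k:ℝ) - (U.card:ℝ)) := by
        push_cast [Nat.cast_sub hcase]
        ring
      rw [h2] at h1
      linarith [hUd]
    have hineq := ineq1 hd0 hdm hmR1 hmkR hkR hr0 hr34 hr2k
    calc min ((k:ℝ)/(4*(n:ℝ))) r * d * (k:ℝ) ≤ r * d * (k:ℝ) := by
          have h0 := min_le_right ((k:ℝ)/(4*(n:ℝ))) r
          nlinarith [mul_le_mul_of_nonneg_right h0 (mul_nonneg hd0 hkRpos.le)]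
      _ ≤ d * (U.card:ℝ) + 2 * ((k:ℝ) - (U.card:ℝ)) := hineq
      _ ≤ (eSum G S : ℝ) := hESbound
  · -- Case 2 : U is large
    push_neg at hcase
    obtain ⟨h, hh⟩ := hke
    have hh2 : 2 ≤ h := by omega
    obtain ⟨v₀, hv₀⟩ := hUne
    have hsing : (G.induce (({v₀} : Finset V) : Set V)).Connected := by
      rw [Finset.coe_singleton]
      exact induce_singleton_connected G v₀
    obtain ⟨T, hT1, hT2, hT3, hT4, hT5⟩ := grow G U hUconn (h - 1) {v₀}
      (Finset.singleton_subset_iff.2 hv₀) ⟨v₀, Finset.mem_singleton_self v₀⟩ hsing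
      (by rw [Finset.card_singleton]; omega)
    have hTcard : T.card = h := by rw [hT3, Finset.card_singleton]; omega
    have hTne : T.Nonempty := ⟨v₀, hT1 (Finset.mem_singleton_self v₀)⟩
    set X := ∑ v ∈ U \ T, degIn G T v with hX
    have hdc : ∑ t ∈ T, degIn G U t = eSum G T + X := by
      have h1 : ∀ t ∈ T, degIn G U t = degIn G T t + degIn G (U \ T) t := by
        intro t _
        conv_lhs => rw [← Finset.union_sdiff_of_subset hT2]
        exact degIn_union Finset.disjoint_sdiff
      rw [Finset.sum_congr rfl h1, Finset.sum_add_distrib]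
      congr 1
      exact degIn_sum_comm (A := T) (B := U \ T)
    have hdsum : d * (h:ℝ) ≤ 2 * ((eSum G T : ℝ) + (X:ℝ)) := by
      have h1 : ∀ t ∈ T, d ≤ 2 * (degIn G U t : ℝ) := fun t ht => hUdeg t (hT2 ht)
      have h2 : d * (T.card:ℝ) ≤ ∑ t ∈ T, 2*(degIn G U t:ℝ) := by
        calc d * (T.card:ℝ) = ∑ _t ∈ T, d := by rw [Finset.sum_const, nsmul_eq_mul]; ring
          _ ≤ _ := Finset.sum_le_sum h1
      have h3 : (∑ t ∈ T, 2*(degIn G U t:ℝ)) = 2 * ((∑ t ∈ T, degIn G U t : ℕ) : ℝ) := by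
        push_cast
        rw [Finset.mul_sum]
      rw [h3, hdc, hTcard] at h2
      push_cast at h2
      linarith
    have hsd : (U \ T).card = U.card - h := by rw [Finset.card_sdiff_of_subset hT2, hTcard]
    obtain ⟨P, hP1, hP2, hP3⟩ := exists_top_subset (U \ T) (degIn G T) h (by omega)
    set Y := ∑ v ∈ P, degIn G T v with hY
    have hXY : h * X ≤ U.card * Y := by
      have h1 : (U \ T).card * Y ≤ U.card * Y :=
        Nat.mul_le_mul_right Y (by omega)
      calc h * X ≤ (U \ T).card * Y := hP3
        _ ≤ U.card * Y := h1
    set P' := P.filter (fun v => 1 ≤ degIn G T v) with hP'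
    have hYP' : ∑ v ∈ P', degIn G T v = Y := by
      rw [hY, hP']
      exact Finset.sum_filter_of_ne (fun x _ hfx => by omega)
    have hP'prop : ∀ v ∈ P', v ∉ T ∧ 1 ≤ degIn G T v := by
      intro v hv
      rw [hP', Finset.mem_filter] at hv
      exact ⟨(Finset.mem_sdiff.1 (hP1 hv.1)).2, hv.2⟩
    obtain ⟨hS₁conn, hS₁card, hS₁e⟩ := attach_set T hT4 P' hP'prop
    rw [hYP'] at hS₁e
    have hS₁cardle : (T ∪ P').card ≤ k := by
      rw [hS₁card, hTcard]
      have h1 : P'.card ≤ P.card := by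
        rw [hP']
        exact Finset.card_filter_le _ _
      omega
    have hS₁ne : (T ∪ P').Nonempty := hTne.mono Finset.subset_union_left
    obtain ⟨S, hSs1, hSs2, hSs3, hSs4, hSs5⟩ := grow G Finset.univ (univ_connected hG)
      (k - (T ∪ P').card) (T ∪ P') (Finset.subset_univ _) hS₁ne hS₁conn
      (by rw [Finset.card_univ, ← hn]; omega)
    have hScard : S.card = k := by omega
    refine ⟨S, hScard, hSs4, ?_⟩
    rw [ge_iff_le, indDensity_eq, hScard, le_div_iff₀ hkRpos]
    -- real facts
    clear_value X Y
    have hES : (eSum G T : ℝ) + 2 * (Y:ℝ) ≤ (eSum G S : ℝ) := by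
      have h1 : eSum G T + 2 * Y ≤ eSum G S := by omega
      exact_mod_cast h1
    have hXYR : (h:ℝ) * (X:ℝ) ≤ (U.card:ℝ) * (Y:ℝ) := by exact_mod_cast hXY
    have hkh : (k:ℝ) = 2*(h:ℝ) := by
      have : k = 2*h := by omega
      exact_mod_cast this
    have hm2h : 2*(h:ℝ) + 1 ≤ (U.card:ℝ) := by
      have : 2*h + 1 ≤ U.card := by omega
      exact_mod_cast this
    have heT0 : (0:ℝ) ≤ (eSum G T : ℝ) := Nat.cast_nonneg _
    have hY0 : (0:ℝ) ≤ (Y:ℝ) := Nat.cast_nonneg _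
    have hX0 : (0:ℝ) ≤ (X:ℝ) := Nat.cast_nonneg _
    have hES0 : (0:ℝ) ≤ (eSum G S : ℝ) := Nat.cast_nonneg _
    have hhR : (2:ℝ) ≤ (h:ℝ) := by exact_mod_cast hh2
    clear hdc hS₁e hSs5 hXY hYP' hP'prop hS₁card hS₁cardle hT5 hT1 hT2 hT3 hP1 hP2 hP3
    clear hSs1 hSs2 hSs3 hsing hsd hUdeg hUd hU₀max hdle hU₀d hM0 hUconn hS₁ne hSs4 hTne
    have key : d * (k:ℝ) * (k:ℝ) ≤ 4 * (n:ℝ) * (eSum G S : ℝ) := by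
      have s1 : (U.card:ℝ) * ((eSum G T : ℝ) + 2*(Y:ℝ)) ≤ (U.card:ℝ) * (eSum G S : ℝ) :=
        mul_le_mul_of_nonneg_left hES (by linarith)
      have s2 : (h:ℝ) * (d * (h:ℝ)) ≤ (h:ℝ) * (2 * ((eSum G T : ℝ) + (X:ℝ))) :=
        mul_le_mul_of_nonneg_left hdsum (by linarith)
      have s3 : (0:ℝ) ≤ ((U.card:ℝ) - 2*(h:ℝ)) * (eSum G T : ℝ) :=
        mul_nonneg (by linarith) heT0
      have s4 : d * (h:ℝ) * (h:ℝ) ≤ (U.card:ℝ) * (eSum G S : ℝ) := by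
        nlinarith [s1, s2, s3, hXYR]
      have s5 : (U.card:ℝ) * (eSum G S : ℝ) ≤ (n:ℝ) * (eSum G S : ℝ) :=
        mul_le_mul_of_nonneg_right hmnR hES0
      rw [hkh]
      nlinarith [s4, s5]
    calc min ((k:ℝ)/(4*(n:ℝ))) r * d * (k:ℝ) ≤ ((k:ℝ)/(4*(n:ℝ))) * d * (k:ℝ) := by
          have h0 := min_le_left ((k:ℝ)/(4*(n:ℝ))) r
          nlinarith [mul_le_mul_of_nonneg_right h0 (mul_nonneg hd0 hkRpos.le)]
      _ ≤ (eSum G S : ℝ) := by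
          rw [div_mul_eq_mul_div, div_mul_eq_mul_div, div_le_iff₀ (by linarith)]
          nlinarith [key]
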